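/- Let y and y′ be involutions of B̄(B̃_n) whose labelled cycle types both have k_e = 0 and l = 0. Then y and y′ are conjugate in B̄(B̃_n) if and only if they have the same labelled cycle type and f(y) + minus(y) ≡ f(y′) + minus(y′) (mod 4). -/

import Mathlib

noncomputable section

open Equiv Finset

/-- Points `±1, …, ±n`, encoded as a sign together with an index. -/
abbrev Pt (n : ℕ) := ℤˣ × Fin n

/-- Negation of a point. -/
def negPt {n : ℕ} (x : Pt n) : Pt n := (-x.1, x.2)

/-- The hyperoctahedral group `H_n` of signed permutations: bijections `σ` of `{±1,…,±n}`
with `σ(-i) = -σ(i)`. -/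
def Hgrp (n : ℕ) : Subgroup (Equiv.Perm (Pt n)) where
  carrier := {σ | ∀ x, σ (negPt x) = negPt (σ x)}
  one_mem' := fun _ => rfl
  mul_mem' := by
    intro σ τ hσ hτ x
    have hσ' : ∀ y, σ (negPt y) = negPt (σ y) := hσ
    have hτ' : ∀ y, τ (negPt y) = negPt (τ y) := hτ
    simp only [Equiv.Perm.mul_apply]
    rw [hτ' x, hσ' (τ x)]
  inv_mem' := by
    intro σ hσ x
    have hσ' : ∀ y, σ (negPt y) = negPt (σ y) := hσ
    apply σ.injective
    rw [hσ']; simp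

lemma Hgrp_apply {n : ℕ} {σ : Equiv.Perm (Pt n)} (hσ : σ ∈ Hgrp n) (δ : ℤˣ) (k : Fin n) :
    σ (δ, k) = (δ * (σ (1, k)).1, (σ (1, k)).2) := by
  have hσ' : ∀ y, σ (negPt y) = negPt (σ y) := hσ
  rcases Int.units_eq_one_or δ with h | h <;> subst h
  · simp
  · have h2 := hσ' (1, k)
    simp only [negPt] at h2
    simpa using h2

/-- The (right) action of a signed permutation on integer vectors:
`(v^σ)_j = ε·v_i` whenever `σ(i) = ε j`. -/
def actV {n : ℕ} (σ : Equiv.Perm (Pt n)) (v : Fin n → ℤ) : Fin n → ℤ :=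
  fun j => ((σ (1, j)).1 : ℤ) * v (σ (1, j)).2

lemma actV_add {n : ℕ} (σ : Equiv.Perm (Pt n)) (a b : Fin n → ℤ) :
    actV σ (a + b) = actV σ a + actV σ b := by
  funext j; simp [actV, mul_add]

lemma actV_zero {n : ℕ} (σ : Equiv.Perm (Pt n)) : actV σ 0 = 0 := by
  funext j; simp [actV]

lemma actV_neg {n : ℕ} (σ : Equiv.Perm (Pt n)) (v : Fin n → ℤ) :
    actV σ (-v) = -actV σ v := by
  funext j; simp [actV]

lemma actV_one {n : ℕ} (v : Fin n → ℤ) : actV 1 v = v := by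
  funext j; simp [actV]

lemma actV_mul {n : ℕ} {σ : Equiv.Perm (Pt n)} (hσ : σ ∈ Hgrp n) (τ : Equiv.Perm (Pt n))
    (v : Fin n → ℤ) : actV (σ * τ) v = actV τ (actV σ v) := by
  funext j
  have h := Hgrp_apply hσ (τ (1, j)).1 (τ (1, j)).2
  rw [Prod.mk.eta] at h
  simp only [actV, Equiv.Perm.mul_apply, h]
  push_cast
  ring

/-- The affine Weyl group of type `C̃ₙ`: pairs `(σ, v)` with `σ` a signed permutation and
`v ∈ ℤⁿ`, with multiplication `(σ,v)(τ,u) = (στ, v^τ + u)`. -/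
@[ext] structure WC (n : ℕ) where
  sigma : Hgrp n
  vec : Fin n → ℤ

namespace WC

variable {n : ℕ}

instance : Mul (WC n) :=
  ⟨fun x y => ⟨x.sigma * y.sigma, actV (y.sigma : Equiv.Perm (Pt n)) x.vec + y.vec⟩⟩

instance : One (WC n) := ⟨⟨1, 0⟩⟩

instance : Inv (WC n) :=
  ⟨fun x => ⟨x.sigma⁻¹, -actV ((x.sigma⁻¹ : Hgrp n) : Equiv.Perm (Pt n)) x.vec⟩⟩

@[simp] lemma mul_sigma (x y : WC n) : (x * y).sigma = x.sigma * y.sigma := rfl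
@[simp] lemma mul_vec (x y : WC n) :
    (x * y).vec = actV (y.sigma : Equiv.Perm (Pt n)) x.vec + y.vec := rfl
@[simp] lemma one_sigma : (1 : WC n).sigma = 1 := rfl
@[simp] lemma one_vec : (1 : WC n).vec = 0 := rfl
@[simp] lemma inv_sigma (x : WC n) : (x⁻¹).sigma = x.sigma⁻¹ := rfl
@[simp] lemma inv_vec (x : WC n) :
    (x⁻¹).vec = -actV ((x.sigma⁻¹ : Hgrp n) : Equiv.Perm (Pt n)) x.vec := rfl

instance : Group (WC n) where
  mul_assoc a b c := by
    refine WC.ext ?_ ?_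
    · exact mul_assoc _ _ _
    · show actV (c.sigma : Equiv.Perm (Pt n))
          (actV (b.sigma : Equiv.Perm (Pt n)) a.vec + b.vec) + c.vec
        = actV (((b.sigma * c.sigma : Hgrp n)) : Equiv.Perm (Pt n)) a.vec
          + (actV (c.sigma : Equiv.Perm (Pt n)) b.vec + c.vec)
      rw [actV_add]
      have hc : (((b.sigma * c.sigma : Hgrp n)) : Equiv.Perm (Pt n))
          = (b.sigma : Equiv.Perm (Pt n)) * (c.sigma : Equiv.Perm (Pt n)) := rfl
      rw [hc, actV_mul b.sigma.2]
      abel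
  one_mul a := by
    refine WC.ext (one_mul _) ?_
    show actV (a.sigma : Equiv.Perm (Pt n)) 0 + a.vec = a.vec
    rw [actV_zero, zero_add]
  mul_one a := by
    refine WC.ext (mul_one _) ?_
    show actV ((1 : Hgrp n) : Equiv.Perm (Pt n)) a.vec + 0 = a.vec
    have h1 : ((1 : Hgrp n) : Equiv.Perm (Pt n)) = 1 := rfl
    rw [h1, actV_one, add_zero]
  inv_mul_cancel a := by
    refine WC.ext (inv_mul_cancel _) ?_
    show actV (a.sigma : Equiv.Perm (Pt n))
        (-actV ((a.sigma⁻¹ : Hgrp n) : Equiv.Perm (Pt n)) a.vec) + a.vec = 0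
    rw [actV_neg, ← actV_mul (a.sigma⁻¹ : Hgrp n).2]
    have h1 : ((a.sigma⁻¹ : Hgrp n) : Equiv.Perm (Pt n)) * (a.sigma : Equiv.Perm (Pt n)) = 1 := by
      rw [← Subgroup.coe_mul, inv_mul_cancel, Subgroup.coe_one]
    rw [h1, actV_one, neg_add_cancel]

end WC

/-- `Σw`: the coordinate sum of the translation part. -/
def sumV {n : ℕ} (x : WC n) : ℤ := ∑ i, x.vec i

/-- `minus(w)`: the number of `i ∈ {1,…,n}` with `σ(i) < 0`. -/
def minusCard {n : ℕ} (x : WC n) : ℕ :=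
  (Finset.univ.filter fun i : Fin n => ((x.sigma : Equiv.Perm (Pt n)) (1, i)).1 = -1).card
lemma permOf_bij {n : ℕ} (σ : Hgrp n) :
    Function.Bijective (fun i : Fin n => ((σ : Equiv.Perm (Pt n)) (1, i)).2) := by
  rw [Fintype.bijective_iff_injective_and_card]
  refine ⟨?_, rfl⟩
  intro i j hij
  simp only at hij
  have hmem : ∀ y, (σ : Equiv.Perm (Pt n)) (negPt y) = negPt ((σ : Equiv.Perm (Pt n)) y) := σ.2
  by_cases h1 : ((σ : Equiv.Perm (Pt n)) (1, i)).1 = ((σ : Equiv.Perm (Pt n)) (1, j)).1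
  · have heq : (σ : Equiv.Perm (Pt n)) (1, i) = (σ : Equiv.Perm (Pt n)) (1, j) :=
      Prod.ext h1 hij
    have h2 := (σ : Equiv.Perm (Pt n)).injective heq
    exact congrArg Prod.snd h2
  · exfalso
    have hfst : ((σ : Equiv.Perm (Pt n)) (1, i)).1 = -((σ : Equiv.Perm (Pt n)) (1, j)).1 := by
      rcases Int.units_eq_one_or ((σ : Equiv.Perm (Pt n)) (1, i)).1 with ha | ha <;>
        rcases Int.units_eq_one_or ((σ : Equiv.Perm (Pt n)) (1, j)).1 with hb | hb <;>
        first
          | exact absurd (ha.trans hb.symm) h1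
          | simp [ha, hb]
    have hne : (σ : Equiv.Perm (Pt n)) (1, i) = negPt ((σ : Equiv.Perm (Pt n)) (1, j)) :=
      Prod.ext hfst hij
    rw [← hmem (1, j)] at hne
    have h3 := (σ : Equiv.Perm (Pt n)).injective hne
    have h4 := congrArg Prod.fst h3
    simp only [negPt] at h4
    exact absurd h4 (by decide)

/-- The underlying (unsigned) permutation of `{1,…,n}` induced by a signed permutation. -/
def permOf {n : ℕ} (σ : Hgrp n) : Equiv.Perm (Fin n) :=
  Equiv.ofBijective _ (permOf_bij σ)

@[simp] lemma permOf_apply {n : ℕ} (σ : Hgrp n) (i : Fin n) :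
    permOf σ i = ((σ : Equiv.Perm (Pt n)) (1, i)).2 := rfl

lemma unitsCast_zmod2 (ε : ℤˣ) : (((ε : ℤ) : ZMod 2)) = 1 := by
  rcases Int.units_eq_one_or ε with h | h <;> subst h <;> decide

lemma sumV_mul {n : ℕ} (x y : WC n) :
    ((sumV (x * y) : ℤ) : ZMod 2) = ((sumV x : ℤ) : ZMod 2) + ((sumV y : ℤ) : ZMod 2) := by
  have key : ∀ (σ : Hgrp n) (v : Fin n → ℤ),
      (∑ i, ((actV (σ : Equiv.Perm (Pt n)) v i : ℤ) : ZMod 2)) = ∑ i, ((v i : ℤ) : ZMod 2) := by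
    intro σ v
    have hterm : ∀ i, ((actV (σ : Equiv.Perm (Pt n)) v i : ℤ) : ZMod 2)
        = ((v (permOf σ i) : ℤ) : ZMod 2) := by
      intro i
      show ((((((σ : Equiv.Perm (Pt n)) (1, i)).1 : ℤ)) * v (((σ : Equiv.Perm (Pt n)) (1, i)).2) : ℤ) : ZMod 2) = _
      push_cast
      rw [unitsCast_zmod2, one_mul]
      rfl
    rw [Finset.sum_congr rfl (fun i _ => hterm i)]
    exact Equiv.sum_comp (permOf σ) (fun i => ((v i : ℤ) : ZMod 2))
  have hvec : (x * y).vec = actV (y.sigma : Equiv.Perm (Pt n)) x.vec + y.vec := rfl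
  unfold sumV
  rw [hvec]
  have hsplit : (∑ i, (actV (y.sigma : Equiv.Perm (Pt n)) x.vec + y.vec) i)
      = (∑ i, actV (y.sigma : Equiv.Perm (Pt n)) x.vec i) + ∑ i, y.vec i := by
    rw [← Finset.sum_add_distrib]; rfl
  rw [hsplit]
  push_cast
  rw [key y.sigma x.vec]

lemma minusCard_one {n : ℕ} : minusCard (1 : WC n) = 0 := by
  unfold minusCard
  rw [Finset.card_eq_zero, Finset.filter_eq_empty_iff]
  intro i _
  show ¬ (((1 : Hgrp n) : Equiv.Perm (Pt n)) (1, i)).1 = -1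
  simp only [OneMemClass.coe_one, Equiv.Perm.one_apply]
  decide

lemma ite_units_mul (u w : ℤˣ) :
    ((if u * w = -1 then (1 : ZMod 2) else 0)) =
      (if u = -1 then (1 : ZMod 2) else 0) + (if w = -1 then (1 : ZMod 2) else 0) := by
  rcases Int.units_eq_one_or u with h | h <;> rcases Int.units_eq_one_or w with h' | h' <;>
    subst h <;> subst h' <;> decide

lemma minusCard_mul {n : ℕ} (x y : WC n) :
    ((minusCard (x * y) : ℕ) : ZMod 2) = (minusCard x : ZMod 2) + (minusCard y : ZMod 2) := by
  have hσ : ∀ i : Fin n, ((x * y).sigma : Equiv.Perm (Pt n)) (1, i)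
      = (x.sigma : Equiv.Perm (Pt n)) ((y.sigma : Equiv.Perm (Pt n)) (1, i)) := fun i => rfl
  unfold minusCard
  rw [Finset.card_filter, Finset.card_filter, Finset.card_filter]
  push_cast
  have step : ∀ i : Fin n,
      ((if (((x * y).sigma : Equiv.Perm (Pt n)) (1, i)).1 = -1 then (1 : ZMod 2) else 0))
      = (if ((y.sigma : Equiv.Perm (Pt n)) (1, i)).1 = -1 then (1 : ZMod 2) else 0)
        + (if ((x.sigma : Equiv.Perm (Pt n)) (1, permOf y.sigma i)).1 = -1
            then (1 : ZMod 2) else 0) := by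
    intro i
    rw [hσ i]
    have h := Hgrp_apply x.sigma.2 ((y.sigma : Equiv.Perm (Pt n)) (1, i)).1
      ((y.sigma : Equiv.Perm (Pt n)) (1, i)).2
    rw [Prod.mk.eta] at h
    rw [h]
    exact ite_units_mul _ _
  calc (∑ i : Fin n, if (((x * y).sigma : Equiv.Perm (Pt n)) (1, i)).1 = -1
          then (1 : ZMod 2) else 0)
      = ∑ i : Fin n, ((if ((y.sigma : Equiv.Perm (Pt n)) (1, i)).1 = -1 then (1 : ZMod 2) else 0)
        + (if ((x.sigma : Equiv.Perm (Pt n)) (1, permOf y.sigma i)).1 = -1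
            then (1 : ZMod 2) else 0)) := Finset.sum_congr rfl (fun i _ => step i)
    _ = (∑ i : Fin n, if ((y.sigma : Equiv.Perm (Pt n)) (1, i)).1 = -1 then (1 : ZMod 2) else 0)
        + ∑ i : Fin n, (if ((x.sigma : Equiv.Perm (Pt n)) (1, permOf y.sigma i)).1 = -1
            then (1 : ZMod 2) else 0) := Finset.sum_add_distrib
    _ = (∑ i : Fin n, if ((x.sigma : Equiv.Perm (Pt n)) (1, i)).1 = -1 then (1 : ZMod 2) else 0)
        + ∑ i : Fin n, (if ((y.sigma : Equiv.Perm (Pt n)) (1, i)).1 = -1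
            then (1 : ZMod 2) else 0) := by
          rw [add_comm]
          congr 1
          exact Equiv.sum_comp (permOf y.sigma)
            (fun k => if ((x.sigma : Equiv.Perm (Pt n)) (1, k)).1 = -1 then (1 : ZMod 2) else 0)
lemma even_int_iff_zmod {a : ℤ} : Even a ↔ ((a : ZMod 2) = 0) := by
  rw [ZMod.intCast_zmod_eq_zero_iff_dvd a 2, Int.even_iff]
  push_cast
  omega

lemma sumV_one {n : ℕ} : sumV (1 : WC n) = 0 := by simp [sumV]

/-- The affine Weyl group of type `B̃ₙ`: the elements `w` of `W(C̃ₙ)` with `Σw` even. -/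
def WB (n : ℕ) : Subgroup (WC n) where
  carrier := {w | Even (sumV w)}
  one_mem' := by
    show Even (sumV (1 : WC n))
    rw [sumV_one]
    exact ⟨0, by norm_num⟩
  mul_mem' := by
    intro a b ha hb
    have ha' : ((sumV a : ℤ) : ZMod 2) = 0 := even_int_iff_zmod.mp ha
    have hb' : ((sumV b : ℤ) : ZMod 2) = 0 := even_int_iff_zmod.mp hb
    refine even_int_iff_zmod.mpr ?_
    rw [sumV_mul, ha', hb', add_zero]
  inv_mem' := by
    intro a ha
    have ha' : ((sumV a : ℤ) : ZMod 2) = 0 := even_int_iff_zmod.mp ha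
    refine even_int_iff_zmod.mpr ?_
    have h1 := sumV_mul a⁻¹ a
    rw [inv_mul_cancel, sumV_one, ha', add_zero] at h1
    simpa using h1.symm

lemma intModEq_two_iff {a b : ℤ} : a ≡ b [ZMOD 2] ↔ ((a : ZMod 2) = (b : ZMod 2)) :=
  (ZMod.intCast_eq_intCast_iff a b 2).symm

/-- The second copy `B̄(B̃ₙ)` of the affine Weyl group of type `B̃ₙ` inside `W(C̃ₙ)`:
elements with `Σw ≡ minus(w) (mod 2)`. -/
def Bbar (n : ℕ) : Subgroup (WC n) where
  carrier := {w | sumV w ≡ (minusCard w : ℤ) [ZMOD 2]}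
  one_mem' := by
    show sumV (1 : WC n) ≡ ((minusCard (1 : WC n) : ℤ)) [ZMOD 2]
    rw [sumV_one, minusCard_one]
    rfl
  mul_mem' := by
    intro a b ha hb
    have ha' := intModEq_two_iff.mp ha
    have hb' := intModEq_two_iff.mp hb
    refine intModEq_two_iff.mpr ?_
    rw [sumV_mul, ha', hb']
    push_cast at ha' hb' ⊢
    rw [minusCard_mul]
  inv_mem' := by
    intro a ha
    have ha' := intModEq_two_iff.mp ha
    refine intModEq_two_iff.mpr ?_
    have h1 := sumV_mul a⁻¹ a
    have h2 := minusCard_mul a⁻¹ a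
    rw [inv_mul_cancel, sumV_one] at h1
    rw [inv_mul_cancel, minusCard_one] at h2
    push_cast at ha' h1 h2 ⊢
    linear_combination h1.symm - h2.symm - ha'

/-- The affine Weyl group of type `D̃ₙ`, as the intersection of the two `B̃ₙ`'s. -/
def WD (n : ℕ) : Subgroup (WC n) := WB n ⊓ Bbar n

instance : DecidablePred (fun k : ℤ => Even k) := fun _ => decidable_of_iff _ Int.even_iff.symm
instance : DecidablePred (fun k : ℤ => Odd k) := fun _ => decidable_of_iff _ Int.odd_iff.symm

/-- The labelled cycle type `(m, k_e, k_o, l)` of an element of `W(C̃ₙ)` (intended for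
involutions): `m` is the number of 2-cycles of `σ`, `k_e` (resp. `k_o`) is the number of
`i` with `σ(i) = -i` whose label `v_i` is even (resp. odd), and `l` is the number of fixed
points of `σ`. -/
def lct {n : ℕ} (x : WC n) : ℕ × ℕ × ℕ × ℕ :=
  ((Finset.univ.filter fun i : Fin n => ((x.sigma : Equiv.Perm (Pt n)) (1, i)).2 ≠ i).card / 2,
   (Finset.univ.filter fun i : Fin n =>
      (x.sigma : Equiv.Perm (Pt n)) (1, i) = (-1, i) ∧ Even (x.vec i)).card,
   (Finset.univ.filter fun i : Fin n =>
      (x.sigma : Equiv.Perm (Pt n)) (1, i) = (-1, i) ∧ Odd (x.vec i)).card,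
   (Finset.univ.filter fun i : Fin n => (x.sigma : Equiv.Perm (Pt n)) (1, i) = (1, i)).card)

/-- `f(x)`: twice the sum of the labels over one chosen entry of each 2-cycle (we choose the
entry with the smaller index), plus the sum of the labels over the negative 1-cycles.  Only
its residue modulo 4 is ever used, and for involutions that residue does not depend on the
choice of entries. -/
def fval {n : ℕ} (x : WC n) : ℤ :=
  2 * (∑ i ∈ Finset.univ.filter
        (fun i : Fin n => i < ((x.sigma : Equiv.Perm (Pt n)) (1, i)).2), x.vec i)
  + ∑ i ∈ Finset.univ.filter
      (fun i : Fin n => (x.sigma : Equiv.Perm (Pt n)) (1, i) = (-1, i)), x.vec i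

/-- The commuting graph on a set `X` of elements of a group: vertices are the elements
of `X`, and distinct vertices are adjacent exactly when they commute.  When `X` is a
conjugacy class of involutions this is the commuting involution graph `C(G,X)`. -/
def commGraph {M : Type*} [Group M] (X : Set M) : SimpleGraph X where
  Adj a b := a ≠ b ∧ (a : M) * (b : M) = (b : M) * (a : M)
  symm := ⟨fun a b h => ⟨h.1.symm, h.2.symm⟩⟩
  loopless := ⟨fun a h => h.1 rfl⟩

/-- The conjugacy class of `x` under conjugation by a subgroup `G`. -/
def ConjugacyClassOf {M : Type*} [Group M] (G : Subgroup M) (x : M) : Set M :=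
  {y | ∃ g ∈ G, g⁻¹ * x * g = y}

/-- `X` is a conjugacy class of involutions of the subgroup `G`. -/
def IsInvolutionConjClass {M : Type*} [Group M] (G : Subgroup M) (X : Set M) : Prop :=
  ∃ x ∈ G, orderOf x = 2 ∧ X = ConjugacyClassOf G x

/-- Sign change at the single coordinate `k`. -/
def negAt {n : ℕ} (k : Fin n) : Equiv.Perm (Pt n) :=
  Function.Involutive.toPerm (fun p => if p.2 = k then (-p.1, p.2) else p) (by
    intro p
    by_cases h : p.2 = k <;> simp [h, Prod.ext_iff])

lemma negAt_mem {n : ℕ} (k : Fin n) : negAt k ∈ Hgrp n := by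
  intro p
  show (if (negPt p).2 = k then (-(negPt p).1, (negPt p).2) else negPt p)
      = negPt (if p.2 = k then (-p.1, p.2) else p)
  by_cases h : p.2 = k <;> simp [negPt, h]

/-- The positive transposition of the coordinates `a` and `b`. -/
def swapPos {n : ℕ} (a b : Fin n) : Equiv.Perm (Pt n) :=
  Equiv.prodCongr (Equiv.refl ℤˣ) (Equiv.swap a b)

lemma swapPos_mem {n : ℕ} (a b : Fin n) : swapPos a b ∈ Hgrp n := fun _ => rfl

/-- The negative transposition of the coordinates `a` and `b` (for `a ≠ b` it sends
`a ↦ -b` and `b ↦ -a`). -/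
def negSwap {n : ℕ} (a b : Fin n) : Equiv.Perm (Pt n) := negAt b * negAt a * swapPos a b

lemma negSwap_mem {n : ℕ} (a b : Fin n) : negSwap a b ∈ Hgrp n :=
  mul_mem (mul_mem (negAt_mem b) (negAt_mem a)) (swapPos_mem a b)

/-- Constructor for elements of `W(C̃ₙ)`. -/
def mkW {n : ℕ} (σ : Equiv.Perm (Pt n)) (h : σ ∈ Hgrp n) (v : Fin n → ℤ) : WC n := ⟨⟨σ, h⟩, v⟩

/-- The simple reflection `r₁ = (σ, 0)` with `σ(1) = -1` (take `k = 0`); more generally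
`(σ, 0)` with `σ(k) = -k`. -/
def rFirstGen (n : ℕ) (k : Fin n) : WC n := mkW (negAt k) (negAt_mem k) 0

/-- The simple reflections `rᵢ = (σ, 0)`, `2 ≤ i ≤ n`, where `σ` exchanges `a` and `b`
positively (take `a, b` adjacent). -/
def swapGen (n : ℕ) (a b : Fin n) : WC n := mkW (swapPos a b) (swapPos_mem a b) 0

/-- The simple reflection `r_{n+1} = (σ, eₙ)` with `σ(n) = -n` (take `k = n-1`). -/
def rLastGen (n : ℕ) (k : Fin n) : WC n := mkW (negAt k) (negAt_mem k) (Pi.single k 1)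

/-- The reflections `s = (σ, e_{n-1} + eₙ)` (take `a = n-2`, `b = n-1`) and
`t = (σ, e₁ + e₂)` (take `a = 0`, `b = 1`), where `σ(a) = -b`, `σ(b) = -a`. -/
def negSwapGen (n : ℕ) (a b : Fin n) : WC n :=
  mkW (negSwap a b) (negSwap_mem a b) (Pi.single a 1 + Pi.single b 1)

/-- The projection `π : W(C̃ₙ) → Hₙ`, `(σ, v) ↦ σ`. -/
def projHom (n : ℕ) : WC n →* Equiv.Perm (Pt n) where
  toFun x := (x.sigma : Equiv.Perm (Pt n))
  map_one' := rfl
  map_mul' _ _ := rfl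

/-- The action of a signed permutation on real vectors. -/
def actR {n : ℕ} (σ : Equiv.Perm (Pt n)) (u : Fin n → ℝ) : Fin n → ℝ :=
  fun j => (((σ (1, j)).1 : ℤ) : ℝ) * u (σ (1, j)).2

/-- The affine action of `w = (σ,v) ∈ W(C̃ₙ)` on `ℝⁿ`: `u ↦ u^σ + v`. -/
def affAct {n : ℕ} (x : WC n) : (Fin n → ℝ) → (Fin n → ℝ) :=
  fun u => actR (x.sigma : Equiv.Perm (Pt n)) u + fun i => ((x.vec i : ℤ) : ℝ)

/-- The affine involution `φ` of `ℝⁿ` with `φ(u)ᵢ = 1/2 - u_{n+1-i}`. -/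
def phiR (n : ℕ) : (Fin n → ℝ) → (Fin n → ℝ) := fun u i => 1 / 2 - u i.rev


namespace BbarAux

open Finset

variable {n : ℕ}

/-- The sign of `σ` at index `i`. -/
def sg (σ : Hgrp n) (i : Fin n) : ℤˣ := (((σ : Equiv.Perm (Pt n))) (1, i)).1

lemma apply_one' (σ : Hgrp n) (i : Fin n) :
    (σ : Equiv.Perm (Pt n)) (1, i) = (sg σ i, permOf σ i) := rfl

lemma apply_any (σ : Hgrp n) (δ : ℤˣ) (i : Fin n) :
    (σ : Equiv.Perm (Pt n)) (δ, i) = (δ * sg σ i, permOf σ i) :=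
  Hgrp_apply σ.2 δ i

lemma permOf_mul (σ τ : Hgrp n) (i : Fin n) :
    permOf (σ * τ) i = permOf σ (permOf τ i) := by
  show (((σ * τ : Hgrp n) : Equiv.Perm (Pt n)) (1, i)).2 = _
  rw [Subgroup.coe_mul, Equiv.Perm.mul_apply, apply_one' τ, apply_any]

lemma sg_mul (σ τ : Hgrp n) (i : Fin n) :
    sg (σ * τ) i = sg τ i * sg σ (permOf τ i) := by
  show (((σ * τ : Hgrp n) : Equiv.Perm (Pt n)) (1, i)).1 = _
  rw [Subgroup.coe_mul, Equiv.Perm.mul_apply, apply_one' τ, apply_any]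

lemma permOf_one' (i : Fin n) : permOf (1 : Hgrp n) i = i := rfl

lemma sg_one' (i : Fin n) : sg (1 : Hgrp n) i = 1 := rfl

lemma actV_apply (σ : Hgrp n) (w : Fin n → ℤ) (i : Fin n) :
    actV (σ : Equiv.Perm (Pt n)) w i = (sg σ i : ℤ) * w (permOf σ i) := rfl

lemma umul_self (ε : ℤˣ) : ε * ε = 1 := by
  rcases Int.units_eq_one_or ε with h | h <;> subst h <;> decide

lemma ucast_sq (ε : ℤˣ) : (ε : ℤ) * (ε : ℤ) = 1 := by
  rcases Int.units_eq_one_or ε with h | h <;> subst h <;> decide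

lemma z4pm (ε : ℤˣ) (a : ℤ) :
    (2 : ZMod 4) * (((ε : ℤ) * a : ℤ) : ZMod 4) = 2 * ((a : ℤ) : ZMod 4) := by
  rcases Int.units_eq_one_or ε with h | h <;> subst h
  · norm_num
  · push_cast
    have h4 : (4 : ZMod 4) = 0 := by decide
    linear_combination (-(a : ZMod 4)) * h4

lemma z4odd (ε : ℤˣ) {a : ℤ} (ha : Odd a) :
    ((((ε : ℤ) * a : ℤ)) : ZMod 4) = ((a : ℤ) : ZMod 4) + (if ε = -1 then 2 else 0) := by
  rcases Int.units_eq_one_or ε with h | h <;> subst h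
  · norm_num
  · obtain ⟨k, rfl⟩ := ha
    have h4 : (4 : ZMod 4) = 0 := by decide
    simp only [if_pos rfl]
    push_cast
    linear_combination (-(k : ZMod 4) - 1) * h4

lemma z4_two_mul_int {a b : ℤ} (h : a ≡ b [ZMOD 2]) :
    (2 : ZMod 4) * ((a : ℤ) : ZMod 4) = 2 * ((b : ℤ) : ZMod 4) := by
  obtain ⟨k, hk⟩ := h.dvd
  have hab : a = b + 2 * (-k) := by linarith
  rw [hab]
  push_cast
  have h4 : (4 : ZMod 4) = 0 := by decide
  linear_combination (-(k : ZMod 4)) * h4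

lemma z4_two_mul_nat {a b : ℕ} (h : (a : ZMod 2) = (b : ZMod 2)) :
    (2 : ZMod 4) * ((a : ℕ) : ZMod 4) = 2 * ((b : ℕ) : ZMod 4) := by
  have h1 : a ≡ b [MOD 2] := (ZMod.natCast_eq_natCast_iff a b 2).mp h
  have h2 : 2 * a ≡ 2 * b [MOD 4] := Nat.ModEq.mul_left' (c := 2) h1
  have h3 : ((2 * a : ℕ) : ZMod 4) = ((2 * b : ℕ) : ZMod 4) :=
    (ZMod.natCast_eq_natCast_iff _ _ _).mpr h2
  push_cast at h3
  exact h3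

end BbarAux

namespace BbarAux

open Finset

variable {n : ℕ}

lemma inv_data (y : WC n) (h : y * y = 1) :
    (∀ i, permOf y.sigma (permOf y.sigma i) = i) ∧
    (∀ i, sg y.sigma (permOf y.sigma i) = sg y.sigma i) ∧
    (∀ i, y.vec (permOf y.sigma i) = -(sg y.sigma i : ℤ) * y.vec i) := by
  have hs : y.sigma * y.sigma = 1 := congrArg WC.sigma h
  have hv : actV (y.sigma : Equiv.Perm (Pt n)) y.vec + y.vec = 0 := congrArg WC.vec h
  refine ⟨?_, ?_, ?_⟩
  · intro i
    have h1 := permOf_mul y.sigma y.sigma i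
    rw [hs, permOf_one'] at h1
    exact h1.symm
  · intro i
    have h1 := sg_mul y.sigma y.sigma i
    rw [hs, sg_one'] at h1
    exact (mul_left_cancel ((umul_self (sg y.sigma i)).trans h1)).symm
  · intro i
    have h1 := congrFun hv i
    simp only [Pi.add_apply, Pi.zero_apply, actV_apply] at h1
    have h2 := ucast_sq (sg y.sigma i)
    linear_combination (sg y.sigma i : ℤ) * h1 - y.vec (permOf y.sigma i) * h2

lemma conj_data (y g y' : WC n) (hconj : g⁻¹ * y * g = y') :
    (∀ i, permOf y.sigma (permOf g.sigma i) = permOf g.sigma (permOf y'.sigma i)) ∧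
    (∀ i, sg g.sigma i * sg y.sigma (permOf g.sigma i)
        = sg y'.sigma i * sg g.sigma (permOf y'.sigma i)) ∧
    (∀ i, y'.vec i = (sg g.sigma i : ℤ) * y.vec (permOf g.sigma i)
        + g.vec i - (sg y'.sigma i : ℤ) * g.vec (permOf y'.sigma i)) := by
  have h : y * g = g * y' := by
    rw [← hconj, ← mul_assoc, ← mul_assoc, mul_inv_cancel, one_mul]
  have hs : y.sigma * g.sigma = g.sigma * y'.sigma := congrArg WC.sigma h
  have hv := congrArg WC.vec h
  refine ⟨?_, ?_, ?_⟩
  · intro i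
    rw [← permOf_mul, ← permOf_mul, hs]
  · intro i
    rw [← sg_mul, ← sg_mul, hs]
  · intro i
    have h1 := congrFun hv i
    simp only [WC.mul_vec, Pi.add_apply, actV_apply] at h1
    linear_combination - h1

lemma filter_pair_lt (s : Fin n → Fin n) :
    (univ.filter fun i : Fin n => ¬ s i = i).filter (fun i => i < s i)
      = univ.filter (fun i => i < s i) := by
  rw [Finset.filter_filter]
  apply Finset.filter_congr
  intro i _
  constructor
  · exact fun h => h.2
  · exact fun h => ⟨fun he => absurd he.symm (ne_of_lt h), h⟩

lemma filter_pair_gt (s : Fin n → Fin n) :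
    (univ.filter fun i : Fin n => ¬ s i = i).filter (fun i => ¬ i < s i)
      = univ.filter (fun i => s i < i) := by
  rw [Finset.filter_filter]
  apply Finset.filter_congr
  intro i _
  constructor
  · exact fun h => lt_of_le_of_ne (not_lt.mp h.2) h.1
  · exact fun h => ⟨ne_of_lt h, not_lt.mpr (le_of_lt h)⟩

lemma pair_split {M : Type*} [AddCommMonoid M] (s : Fin n → Fin n)
    (hs : ∀ i, s (s i) = i) (f : Fin n → M) :
    ∑ i ∈ univ.filter (fun i => ¬ s i = i), f i
      = ∑ i ∈ univ.filter (fun i => i < s i), (f i + f (s i)) := by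
  rw [Finset.sum_add_distrib]
  have h2 : ∑ i ∈ univ.filter (fun i => i < s i), f (s i)
      = ∑ i ∈ univ.filter (fun i : Fin n => s i < i), f i := by
    refine Finset.sum_nbij' s s ?_ ?_ ?_ ?_ ?_
    · intro a ha
      simp only [mem_filter, mem_univ, true_and] at *
      rw [hs]; exact ha
    · intro a ha
      simp only [mem_filter, mem_univ, true_and] at *
      rw [hs]; exact ha
    · intro a _; exact hs a
    · intro a _; exact hs a
    · intro a _; rfl
  rw [h2, ← filter_pair_lt s, ← filter_pair_gt s,
    Finset.sum_filter_add_sum_filter_not]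

lemma transversal_sum {M : Type*} [AddCommMonoid M]
    (s s' : Fin n → Fin n) (t : Equiv.Perm (Fin n))
    (hs : ∀ i, s (s i) = i) (hC : ∀ i, s (t i) = t (s' i))
    (f : Fin n → M) (hf : ∀ i, f (s i) = f i) :
    ∑ i ∈ univ.filter (fun i => i < s' i), f (t i)
      = ∑ j ∈ univ.filter (fun j => j < s j), f j := by
  have hs' : ∀ i, s' (s' i) = i := by
    intro i
    apply t.injective
    rw [← hC, ← hC, hs]
  have hsymm : ∀ j, t.symm (s j) = s' (t.symm j) := by
    intro j
    apply t.injective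
    rw [Equiv.apply_symm_apply, ← hC, Equiv.apply_symm_apply]
  have hA'ne : ∀ i : Fin n, i < s' i → s (t i) ≠ t i := by
    intro i hi he
    rw [hC] at he
    exact absurd (t.injective he).symm (ne_of_lt hi)
  have hAne : ∀ j : Fin n, j < s j → s' (t.symm j) ≠ t.symm j := by
    intro j hj he
    rw [← hsymm] at he
    exact absurd (t.symm.injective he).symm (ne_of_lt hj)
  refine Finset.sum_nbij' (fun i => if t i < s (t i) then t i else s (t i))
    (fun j => if t.symm j < s' (t.symm j) then t.symm j else s' (t.symm j))
    ?_ ?_ ?_ ?_ ?_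
  · intro i hi
    simp only [mem_filter, mem_univ, true_and] at *
    by_cases h : t i < s (t i)
    · rw [if_pos h]; exact h
    · rw [if_neg h, hs]
      exact lt_of_le_of_ne (not_lt.mp h) (hA'ne i hi)
  · intro j hj
    simp only [mem_filter, mem_univ, true_and] at *
    by_cases h : t.symm j < s' (t.symm j)
    · rw [if_pos h]; exact h
    · rw [if_neg h, hs']
      exact lt_of_le_of_ne (not_lt.mp h) (hAne j hj)
  · intro i hi
    simp only [mem_filter, mem_univ, true_and] at hi
    by_cases h : t i < s (t i)
    · rw [if_pos h, Equiv.symm_apply_apply, if_pos hi]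
    · rw [if_neg h, hC, Equiv.symm_apply_apply, if_neg, hs']
      rw [hs']
      exact not_lt.mpr (le_of_lt hi)
  · intro j hj
    simp only [mem_filter, mem_univ, true_and] at hj
    by_cases h : t.symm j < s' (t.symm j)
    · rw [if_pos h, Equiv.apply_symm_apply, if_pos hj]
    · rw [if_neg h, ← hsymm, Equiv.apply_symm_apply, if_neg, hs]
      rw [hs]
      exact not_lt.mpr (le_of_lt hj)
  · intro i _
    by_cases h : t i < s (t i)
    · rw [if_pos h]
    · rw [if_neg h, hf]

end BbarAux

namespace BbarAux

open Finset

variable {n : ℕ}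

lemma symm_rel (s s' : Fin n → Fin n) (t : Equiv.Perm (Fin n))
    (hC : ∀ i, s (t i) = t (s' i)) : ∀ j, t.symm (s j) = s' (t.symm j) := by
  intro j
  apply t.injective
  rw [Equiv.apply_symm_apply, ← hC, Equiv.apply_symm_apply]

lemma fix_nbij_sum {M : Type*} [AddCommMonoid M] (s s' : Fin n → Fin n)
    (t : Equiv.Perm (Fin n)) (hC : ∀ i, s (t i) = t (s' i)) (f : Fin n → M) :
    ∑ i ∈ univ.filter (fun i => s' i = i), f (t i)
      = ∑ j ∈ univ.filter (fun j => s j = j), f j := by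
  have hsymm := symm_rel s s' t hC
  refine Finset.sum_nbij' t t.symm ?_ ?_ ?_ ?_ ?_
  · intro i hi
    simp only [mem_filter, mem_univ, true_and] at *
    rw [hC, hi]
  · intro j hj
    simp only [mem_filter, mem_univ, true_and] at *
    rw [← hsymm, hj]
  · intro i _; exact t.symm_apply_apply i
  · intro j _; exact t.apply_symm_apply j
  · intro i _; rfl

lemma fix_nbij_card (s s' : Fin n → Fin n)
    (t : Equiv.Perm (Fin n)) (hC : ∀ i, s (t i) = t (s' i)) :
    (univ.filter (fun i => s' i = i)).card = (univ.filter (fun j => s j = j)).card := by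
  have h := fix_nbij_sum s s' t hC (fun _ => (1 : ℕ))
  rwa [Finset.sum_const, Finset.sum_const, smul_eq_mul, mul_one, smul_eq_mul, mul_one] at h

lemma move_nbij_card (s s' : Fin n → Fin n)
    (t : Equiv.Perm (Fin n)) (hC : ∀ i, s (t i) = t (s' i)) :
    (univ.filter (fun i => ¬ s' i = i)).card = (univ.filter (fun j => ¬ s j = j)).card := by
  have hsymm := symm_rel s s' t hC
  refine Finset.card_nbij' t t.symm ?_ ?_ ?_ ?_
  · intro i hi
    simp only [Finset.mem_coe, mem_filter, mem_univ, true_and] at *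
    intro he
    apply hi
    apply t.injective
    rw [← hC, he]
  · intro j hj
    simp only [Finset.mem_coe, mem_filter, mem_univ, true_and] at *
    intro he
    apply hj
    have := hsymm j
    rw [he] at this
    have h2 := congrArg t this
    rw [Equiv.apply_symm_apply, Equiv.apply_symm_apply] at h2
    exact h2
  · intro i _; exact t.symm_apply_apply i
  · intro j _; exact t.apply_symm_apply j

lemma card_filter_cast {R : Type*} [AddCommMonoidWithOne R] (S : Finset (Fin n))
    (P : Fin n → Prop) [DecidablePred P] :
    (((S.filter P).card : ℕ) : R) = ∑ i ∈ S, (if P i then (1 : R) else 0) := by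
  rw [Finset.card_filter, Nat.cast_sum]
  refine Finset.sum_congr rfl fun i _ => ?_
  split <;> simp

end BbarAux

namespace BbarAux

open Finset

variable {n : ℕ}

/-- indicator of a negative sign, in `ZMod 2` -/
def ind2 (x : ℤˣ) : ZMod 2 := if x = -1 then 1 else 0

lemma core (s s' : Fin n → Fin n) (t : Equiv.Perm (Fin n))
    (η η' ε : Fin n → ℤˣ) (v v' u : Fin n → ℤ)
    (S1 : ∀ i, s (s i) = i) (S2 : ∀ i, η (s i) = η i) (S3 : ∀ i, v (s i) = -(η i : ℤ) * v i)
    (T1 : ∀ i, s' (s' i) = i) (T2 : ∀ i, η' (s' i) = η' i)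
    (C1 : ∀ i, s (t i) = t (s' i))
    (C2 : ∀ i, ε i * η (t i) = η' i * ε (s' i))
    (C3 : ∀ i, v' i = (ε i : ℤ) * v (t i) + u i - (η' i : ℤ) * u (s' i))
    (hfix : ∀ i, s i = i → η i = -1 ∧ Odd (v i))
    (hfix' : ∀ i, s' i = i → η' i = -1 ∧ Odd (v' i))
    (hBbar : (∑ i, u i) ≡ (((univ.filter fun i => ε i = -1).card : ℕ) : ℤ) [ZMOD 2]) :
    ((2 * (∑ i ∈ univ.filter fun i => i < s' i, v' i)
        + (∑ i ∈ univ.filter fun i => s' i = i, v' i)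
        + (((univ.filter fun i => η' i = -1).card : ℕ) : ℤ) : ℤ) : ZMod 4)
      = (((2 * (∑ i ∈ univ.filter fun i => i < s i, v i)
        + (∑ i ∈ univ.filter fun i => s i = i, v i)
        + (((univ.filter fun i => η i = -1).card : ℕ) : ℤ) : ℤ)) : ZMod 4) := by
  classical
  have h4 : (4 : ZMod 4) = 0 := by decide
  -- the A' part
  have E2 : (2 : ZMod 4) * ∑ i ∈ univ.filter (fun i => i < s' i), ((v' i : ℤ) : ZMod 4)
      = (∑ i ∈ univ.filter (fun i => i < s' i), 2 * ((v (t i) : ℤ) : ZMod 4))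
        + 2 * ∑ i ∈ univ.filter (fun i => i < s' i),
            (((u i : ℤ) : ZMod 4) + ((u (s' i) : ℤ) : ZMod 4)) := by
    rw [Finset.mul_sum, Finset.mul_sum, ← Finset.sum_add_distrib]
    refine Finset.sum_congr rfl fun i _ => ?_
    have p1 := z4pm (ε i) (v (t i))
    have p2 := z4pm (-(η' i)) (u (s' i))
    rw [C3 i]
    push_cast at p1 p2 ⊢
    linear_combination p1 + p2
  have E3 : (∑ i ∈ univ.filter (fun i => i < s' i), 2 * ((v (t i) : ℤ) : ZMod 4))
      = ∑ j ∈ univ.filter (fun j => j < s j), 2 * ((v j : ℤ) : ZMod 4) := by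
    refine transversal_sum s s' t S1 C1 (fun j => 2 * ((v j : ℤ) : ZMod 4)) ?_
    intro j
    rw [S3 j]
    have := z4pm (-(η j)) (v j)
    push_cast at this ⊢
    linear_combination this
  have E4 : (∑ i ∈ univ.filter (fun i => i < s' i),
        (((u i : ℤ) : ZMod 4) + ((u (s' i) : ℤ) : ZMod 4)))
      = ∑ i ∈ univ.filter (fun i => ¬ s' i = i), ((u i : ℤ) : ZMod 4) :=
    (pair_split s' T1 (fun i => ((u i : ℤ) : ZMod 4))).symm
  -- the K' part
  have E5 : (∑ i ∈ univ.filter (fun i => s' i = i), ((v' i : ℤ) : ZMod 4))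
      = (∑ i ∈ univ.filter (fun i => s' i = i), ((v (t i) : ℤ) : ZMod 4))
        + 2 * (∑ i ∈ univ.filter (fun i => s' i = i), ((u i : ℤ) : ZMod 4))
        + 2 * ((((univ.filter (fun i => s' i = i)).filter (fun i => ε i = -1)).card : ℕ)
            : ZMod 4) := by
    rw [Finset.mul_sum, card_filter_cast, Finset.mul_sum, ← Finset.sum_add_distrib,
      ← Finset.sum_add_distrib]
    refine Finset.sum_congr rfl fun i hi => ?_
    simp only [mem_filter, mem_univ, true_and] at hi
    have hη' : η' i = -1 := (hfix' i hi).1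
    have hst : s (t i) = t i := by rw [C1, hi]
    have hodd : Odd (v (t i)) := (hfix (t i) hst).2
    have hz := z4odd (ε i) hodd
    rw [C3 i, hi, hη']
    push_cast at hz ⊢
    rw [mul_ite, mul_one, mul_zero]
    linear_combination hz
  have E6 : (∑ i ∈ univ.filter (fun i => s' i = i), ((v (t i) : ℤ) : ZMod 4))
      = ∑ j ∈ univ.filter (fun j => s j = j), ((v j : ℤ) : ZMod 4) :=
    fix_nbij_sum s s' t C1 (fun j => ((v j : ℤ) : ZMod 4))
  -- splitting the translation sum
  have E7 : (∑ i ∈ univ.filter (fun i => s' i = i), ((u i : ℤ) : ZMod 4))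
      + (∑ i ∈ univ.filter (fun i => ¬ s' i = i), ((u i : ℤ) : ZMod 4))
      = ∑ i, ((u i : ℤ) : ZMod 4) :=
    Finset.sum_filter_add_sum_filter_not univ (fun i => s' i = i) _
  -- Bbar condition
  have E8 : (2 : ZMod 4) * ∑ i, ((u i : ℤ) : ZMod 4)
      = 2 * (((univ.filter fun i => ε i = -1).card : ℕ) : ZMod 4) := by
    have := z4_two_mul_int hBbar
    push_cast at this ⊢
    exact this
  have E9 : (((univ.filter fun i => ε i = -1).card : ℕ) : ZMod 4)
      = ((((univ.filter (fun i => s' i = i)).filter (fun i => ε i = -1)).card : ℕ) : ZMod 4)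
        + ((((univ.filter (fun i => ¬ s' i = i)).filter (fun i => ε i = -1)).card : ℕ)
          : ZMod 4) := by
    rw [card_filter_cast, card_filter_cast, card_filter_cast,
      Finset.sum_filter_add_sum_filter_not univ (fun i => s' i = i)]
  -- minus splittings
  have hfix1 : (∑ i ∈ univ.filter (fun i => s' i = i), if η' i = -1 then (1 : ZMod 4) else 0)
      = (((univ.filter (fun i => s' i = i)).card : ℕ) : ZMod 4) := by
    rw [Finset.sum_congr rfl (fun i hi => if_pos (hfix' i (Finset.mem_filter.mp hi).2).1),
      Finset.sum_const, nsmul_eq_mul, mul_one]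
  have E10 : (((univ.filter fun i => η' i = -1).card : ℕ) : ZMod 4)
      = (((univ.filter fun i => s' i = i).card : ℕ) : ZMod 4)
        + ((((univ.filter (fun i => ¬ s' i = i)).filter (fun i => η' i = -1)).card : ℕ)
          : ZMod 4) := by
    rw [card_filter_cast univ (fun i => η' i = -1),
      card_filter_cast (univ.filter fun i => ¬ s' i = i) (fun i => η' i = -1),
      ← hfix1, Finset.sum_filter_add_sum_filter_not]
  have hfixy1 : (∑ i ∈ univ.filter (fun i => s i = i), if η i = -1 then (1 : ZMod 4) else 0)
      = (((univ.filter (fun i => s i = i)).card : ℕ) : ZMod 4) := by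
    rw [Finset.sum_congr rfl (fun i hi => if_pos (hfix i (Finset.mem_filter.mp hi).2).1),
      Finset.sum_const, nsmul_eq_mul, mul_one]
  have E10y : (((univ.filter fun i => η i = -1).card : ℕ) : ZMod 4)
      = (((univ.filter fun i => s i = i).card : ℕ) : ZMod 4)
        + ((((univ.filter (fun i => ¬ s i = i)).filter (fun i => η i = -1)).card : ℕ)
          : ZMod 4) := by
    rw [card_filter_cast univ (fun i => η i = -1),
      card_filter_cast (univ.filter fun i => ¬ s i = i) (fun i => η i = -1),
      ← hfixy1, Finset.sum_filter_add_sum_filter_not]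
  -- pairing counts (in ℕ)
  have E11' : ((univ.filter (fun i => ¬ s' i = i)).filter (fun i => η' i = -1)).card
      = 2 * ((univ.filter (fun i => i < s' i)).filter (fun i => η' i = -1)).card := by
    rw [Finset.card_filter, Finset.card_filter,
      pair_split s' T1 (fun i => if η' i = -1 then (1 : ℕ) else 0), Finset.mul_sum]
    refine Finset.sum_congr rfl fun i _ => ?_
    rw [T2]
    split <;> norm_num
  have E11y' : ((univ.filter (fun i => ¬ s i = i)).filter (fun i => η i = -1)).card
      = 2 * ((univ.filter (fun i => i < s i)).filter (fun i => η i = -1)).card := by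
    rw [Finset.card_filter, Finset.card_filter,
      pair_split s S1 (fun i => if η i = -1 then (1 : ℕ) else 0), Finset.mul_sum]
    refine Finset.sum_congr rfl fun i _ => ?_
    rw [S2]
    split <;> norm_num
  have E11z : ((((univ.filter (fun i => ¬ s' i = i)).filter (fun i => η' i = -1)).card : ℕ)
        : ZMod 4)
      = 2 * ((((univ.filter (fun i => i < s' i)).filter (fun i => η' i = -1)).card : ℕ)
        : ZMod 4) := by exact_mod_cast congrArg (Nat.cast : ℕ → ZMod 4) E11'
  have E11yz : ((((univ.filter (fun i => ¬ s i = i)).filter (fun i => η i = -1)).card : ℕ)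
        : ZMod 4)
      = 2 * ((((univ.filter (fun i => i < s i)).filter (fun i => η i = -1)).card : ℕ)
        : ZMod 4) := by exact_mod_cast congrArg (Nat.cast : ℕ → ZMod 4) E11y'
  -- the sign-flip parity claim, in ZMod 2
  have hC2' : ∀ i, η' i = ε i * η (t i) * ε (s' i) := by
    intro i
    have h := C2 i
    rcases Int.units_eq_one_or (ε i) with h1 | h1 <;>
      rcases Int.units_eq_one_or (ε (s' i)) with h2 | h2 <;>
      rcases Int.units_eq_one_or (η (t i)) with h3 | h3 <;>
      rcases Int.units_eq_one_or (η' i) with h5 | h5 <;>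
      rw [h1, h2, h3, h5] at h ⊢ <;> revert h <;> decide
  have w2 : (∑ i ∈ univ.filter (fun i => i < s' i), ind2 (η' i))
      = (∑ i ∈ univ.filter (fun i => i < s' i), (ind2 (ε i) + ind2 (ε (s' i))))
        + ∑ i ∈ univ.filter (fun i => i < s' i), ind2 (η (t i)) := by
    rw [← Finset.sum_add_distrib]
    refine Finset.sum_congr rfl fun i _ => ?_
    show ind2 (η' i) = _
    rw [hC2' i]
    unfold ind2
    rw [ite_units_mul, ite_units_mul]
    ring
  have w3 : (∑ i ∈ univ.filter (fun i => i < s' i), (ind2 (ε i) + ind2 (ε (s' i))))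
      = ∑ i ∈ univ.filter (fun i => ¬ s' i = i), ind2 (ε i) :=
    (pair_split s' T1 (fun i => ind2 (ε i))).symm
  have w4 : (∑ i ∈ univ.filter (fun i => i < s' i), ind2 (η (t i)))
      = ∑ j ∈ univ.filter (fun j => j < s j), ind2 (η j) := by
    refine transversal_sum s s' t S1 C1 (fun j => ind2 (η j)) ?_
    intro j
    show ind2 (η (s j)) = ind2 (η j)
    rw [S2]
  have ccast : ∀ (S : Finset (Fin n)) (w : Fin n → ℤˣ),
      (((S.filter (fun i => w i = -1)).card : ℕ) : ZMod 2) = ∑ i ∈ S, ind2 (w i) :=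
    fun S w => card_filter_cast S (fun i => w i = -1)
  have E12 : (((((univ.filter (fun i => ¬ s' i = i)).filter (fun i => ε i = -1)).card
        + ((univ.filter (fun i => i < s' i)).filter (fun i => η' i = -1)).card : ℕ)) : ZMod 2)
      = ((((univ.filter (fun i => i < s i)).filter (fun i => η i = -1)).card : ℕ) : ZMod 2) := by
    push_cast
    rw [ccast, ccast, ccast, w2, w3, w4]
    have h2 : (2 : ZMod 2) = 0 := by decide
    ring_nf
    linear_combination (∑ i ∈ univ.filter (fun i => ¬ s' i = i), ind2 (ε i)) * h2
  have E13 : (2 : ZMod 4) * ((((univ.filter (fun i => ¬ s' i = i)).filter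
          (fun i => ε i = -1)).card : ℕ) : ZMod 4)
        + 2 * ((((univ.filter (fun i => i < s' i)).filter (fun i => η' i = -1)).card : ℕ)
          : ZMod 4)
      = 2 * ((((univ.filter (fun i => i < s i)).filter (fun i => η i = -1)).card : ℕ)
          : ZMod 4) := by
    have := z4_two_mul_nat E12
    push_cast at this
    linear_combination this
  have EK : (((univ.filter (fun i => s' i = i)).card : ℕ) : ZMod 4)
      = (((univ.filter (fun j => s j = j)).card : ℕ) : ZMod 4) :=
    congrArg _ (fix_nbij_card s s' t C1)
  have E3b : (∑ j ∈ univ.filter (fun j => j < s j), 2 * ((v j : ℤ) : ZMod 4))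
      = 2 * ∑ j ∈ univ.filter (fun j => j < s j), ((v j : ℤ) : ZMod 4) :=
    (Finset.mul_sum _ _ _).symm
  push_cast
  linear_combination E2 + E3 + E3b + 2 * E4 + E5 + E6 + 2 * E7 + E8 + 2 * E9 + E10 - E10y
    + E11z - E11yz + E13 + EK
    + ((((univ.filter (fun i => s' i = i)).filter (fun i => ε i = -1)).card : ℕ) : ZMod 4) * h4

end BbarAux

namespace BbarAux

open Finset

variable {n : ℕ}

lemma eq_pair_iff (σ : Hgrp n) (δ : ℤˣ) (i j : Fin n) :
    ((σ : Equiv.Perm (Pt n)) (1, i) = (δ, j)) ↔ (sg σ i = δ ∧ permOf σ i = j) := by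
  rw [apply_one', Prod.mk.injEq]

lemma minusCard_eq (x : WC n) :
    minusCard x = (univ.filter fun i => sg x.sigma i = -1).card :=
  congrArg Finset.card (Finset.filter_congr fun i _ => Iff.rfl)

lemma fval_eq (x : WC n) (hfix : ∀ i, permOf x.sigma i = i → sg x.sigma i = -1) :
    fval x = 2 * (∑ i ∈ univ.filter fun i => i < permOf x.sigma i, x.vec i)
      + ∑ i ∈ univ.filter fun i => permOf x.sigma i = i, x.vec i := by
  unfold fval
  have h1 : (univ.filter fun i : Fin n => i < ((x.sigma : Equiv.Perm (Pt n)) (1, i)).2)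
      = univ.filter fun i => i < permOf x.sigma i :=
    Finset.filter_congr fun i _ => Iff.rfl
  have h2 : (univ.filter fun i : Fin n => (x.sigma : Equiv.Perm (Pt n)) (1, i) = (-1, i))
      = univ.filter fun i => permOf x.sigma i = i := by
    apply Finset.filter_congr
    intro i _
    rw [eq_pair_iff]
    exact ⟨fun h => h.2, fun h => ⟨(hfix i h), h⟩⟩
  rw [h1, h2]

lemma invariance (y g y' : WC n) (hyy : y * y = 1) (hg : g ∈ Bbar n)
    (hfix : ∀ i, permOf y.sigma i = i → sg y.sigma i = -1 ∧ Odd (y.vec i))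
    (hconj : g⁻¹ * y * g = y') :
    (y' * y' = 1) ∧
    (∀ i, permOf y'.sigma i = i → sg y'.sigma i = -1 ∧ Odd (y'.vec i)) ∧
    lct y' = lct y ∧
    (((fval y' + (minusCard y' : ℤ)) : ℤ) : ZMod 4)
      = (((fval y + (minusCard y : ℤ)) : ℤ) : ZMod 4) := by
  have hy'y' : y' * y' = 1 := by
    rw [← hconj]
    calc (g⁻¹ * y * g) * (g⁻¹ * y * g) = g⁻¹ * (y * y) * g := by group
    _ = 1 := by rw [hyy, mul_one, inv_mul_cancel]
  obtain ⟨S1, S2, S3⟩ := inv_data y hyy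
  obtain ⟨T1, T2, T3⟩ := inv_data y' hy'y'
  obtain ⟨C1, C2, C3⟩ := conj_data y g y' hconj
  have hfix' : ∀ i, permOf y'.sigma i = i → sg y'.sigma i = -1 ∧ Odd (y'.vec i) := by
    intro i hi
    have h1 : permOf y.sigma (permOf g.sigma i) = permOf g.sigma i := by rw [C1 i, hi]
    obtain ⟨hη, hodd⟩ := hfix _ h1
    have hη' : sg y'.sigma i = -1 := by
      have h2 := C2 i
      rw [hi, hη] at h2
      rcases Int.units_eq_one_or (sg y'.sigma i) with h' | h'
      · exfalso
        rw [h'] at h2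
        rcases Int.units_eq_one_or (sg g.sigma i) with h | h <;> rw [h] at h2 <;>
          revert h2 <;> decide
      · exact h'
    refine ⟨hη', ?_⟩
    have h3 := C3 i
    rw [hi, hη'] at h3
    have h4 : y'.vec i = (sg g.sigma i : ℤ) * y.vec (permOf g.sigma i) + 2 * g.vec i := by
      rw [h3]; push_cast; ring
    rw [h4]
    have hoddm : Odd ((sg g.sigma i : ℤ) * y.vec (permOf g.sigma i)) := by
      rcases Int.units_eq_one_or (sg g.sigma i) with h | h <;> rw [h] <;> push_cast
      · simpa using hodd
      · simpa using hodd.neg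
    exact hoddm.add_even (even_two_mul _)
  refine ⟨hy'y', hfix', ?_, ?_⟩
  · -- lct equality
    have hraw : ∀ x : WC n,
        (univ.filter fun i : Fin n => ((x.sigma : Equiv.Perm (Pt n)) (1, i)).2 ≠ i)
          = univ.filter fun i => ¬ permOf x.sigma i = i :=
      fun x => Finset.filter_congr fun i _ => Iff.rfl
    have hko : ∀ x : WC n, (∀ i, permOf x.sigma i = i → sg x.sigma i = -1 ∧ Odd (x.vec i)) →
        (univ.filter fun i : Fin n =>
            (x.sigma : Equiv.Perm (Pt n)) (1, i) = (-1, i) ∧ Odd (x.vec i))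
          = univ.filter fun i => permOf x.sigma i = i := by
      intro x hfx
      apply Finset.filter_congr
      intro i _
      rw [eq_pair_iff]
      exact ⟨fun h => h.1.2, fun h => ⟨⟨(hfx i h).1, h⟩, (hfx i h).2⟩⟩
    have hke : ∀ x : WC n, (∀ i, permOf x.sigma i = i → sg x.sigma i = -1 ∧ Odd (x.vec i)) →
        (univ.filter fun i : Fin n =>
            (x.sigma : Equiv.Perm (Pt n)) (1, i) = (-1, i) ∧ Even (x.vec i)) = ∅ := by
      intro x hfx
      rw [Finset.filter_eq_empty_iff]
      intro i _
      rw [eq_pair_iff]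
      rintro ⟨⟨h1, h2⟩, h3⟩
      exact (Int.not_even_iff_odd.mpr (hfx i h2).2) h3
    have hl : ∀ x : WC n, (∀ i, permOf x.sigma i = i → sg x.sigma i = -1 ∧ Odd (x.vec i)) →
        (univ.filter fun i : Fin n =>
            (x.sigma : Equiv.Perm (Pt n)) (1, i) = (1, i)) = ∅ := by
      intro x hfx
      rw [Finset.filter_eq_empty_iff]
      intro i _
      rw [eq_pair_iff]
      rintro ⟨h1, h2⟩
      have := (hfx i h2).1
      rw [h1] at this
      exact absurd this (by decide)
    simp only [lct, Prod.mk.injEq]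
    refine ⟨?_, ?_, ?_, ?_⟩
    · rw [hraw y, hraw y',
        move_nbij_card (fun i => permOf y.sigma i) (fun i => permOf y'.sigma i)
          (permOf g.sigma) C1]
    · rw [hke y' hfix', hke y hfix]
    · rw [hko y' hfix', hko y hfix,
        fix_nbij_card (fun i => permOf y.sigma i) (fun i => permOf y'.sigma i)
          (permOf g.sigma) C1]
    · rw [hl y' hfix', hl y hfix]
  · -- the mod 4 invariant
    rw [fval_eq y' (fun i hi => (hfix' i hi).1), fval_eq y (fun i hi => (hfix i hi).1),
      minusCard_eq y', minusCard_eq y]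
    have hBbar : (∑ i, g.vec i)
        ≡ (((univ.filter fun i => sg g.sigma i = -1).card : ℕ) : ℤ) [ZMOD 2] := by
      have := hg
      rw [show (g ∈ Bbar n) ↔ sumV g ≡ (minusCard g : ℤ) [ZMOD 2] from Iff.rfl,
        minusCard_eq g] at this
      exact this
    exact core (fun i => permOf y.sigma i) (fun i => permOf y'.sigma i) (permOf g.sigma)
      (fun i => sg y.sigma i) (fun i => sg y'.sigma i) (fun i => sg g.sigma i)
      y.vec y'.vec g.vec S1 S2 S3 T1 T2 C1 C2 C3 hfix hfix' hBbar

end BbarAux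

namespace BbarAux

open Finset

variable {n : ℕ}

lemma exists_t_eps (s s' : Fin n → Fin n) (η η' : Fin n → ℤˣ)
    (S1 : ∀ i, s (s i) = i) (S2 : ∀ i, η (s i) = η i)
    (T1 : ∀ i, s' (s' i) = i) (T2 : ∀ i, η' (s' i) = η' i)
    (hfs : ∀ i, s i = i → η i = -1) (hfs' : ∀ i, s' i = i → η' i = -1)
    (hcard : (univ.filter fun i => s' i = i).card = (univ.filter fun i => s i = i).card) :
    ∃ (t : Equiv.Perm (Fin n)) (ε : Fin n → ℤˣ),
      (∀ i, s (t i) = t (s' i)) ∧ (∀ i, ε i * η (t i) = η' i * ε (s' i)) := by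
  classical
  have hDcard : (univ.filter fun i => ¬ s' i = i).card
      = (univ.filter fun i => ¬ s i = i).card := by
    have h1 := Finset.card_filter_add_card_filter_not
      (s := (univ : Finset (Fin n))) (p := fun i => s' i = i)
    have h2 := Finset.card_filter_add_card_filter_not
      (s := (univ : Finset (Fin n))) (p := fun i => s i = i)
    omega
  have hpair : ∀ (r : Fin n → Fin n), (∀ i, r (r i) = i) →
      (univ.filter fun i => ¬ r i = i).card = 2 * (univ.filter fun i => i < r i).card := by
    intro r hr
    have h := pair_split r hr (fun _ => (1 : ℕ))
    simp only [Finset.sum_const, smul_eq_mul, mul_one] at h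
    omega
  have hAcard : (univ.filter fun i => i < s' i).card = (univ.filter fun i => i < s i).card := by
    have h1 := hpair s' T1
    have h2 := hpair s S1
    omega
  have e2 : {x // x ∈ univ.filter fun i : Fin n => s' i = i}
      ≃ {x // x ∈ univ.filter fun i : Fin n => s i = i} := Finset.equivOfCardEq hcard
  have e1 : {x // x ∈ univ.filter fun i : Fin n => i < s' i}
      ≃ {x // x ∈ univ.filter fun i : Fin n => i < s i} := Finset.equivOfCardEq hAcard
  have memK2 : ∀ x, s (↑(e2 x)) = ↑(e2 x) := fun x => (Finset.mem_filter.mp (e2 x).2).2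
  have memA1 : ∀ x, (↑(e1 x) : Fin n) < s ↑(e1 x) := fun x => (Finset.mem_filter.mp (e1 x).2).2
  set tfun : Fin n → Fin n := fun i =>
    if h : s' i = i then ↑(e2 ⟨i, Finset.mem_filter.mpr ⟨Finset.mem_univ i, h⟩⟩)
    else if h2 : i < s' i then ↑(e1 ⟨i, Finset.mem_filter.mpr ⟨Finset.mem_univ i, h2⟩⟩)
    else s ↑(e1 ⟨s' i, Finset.mem_filter.mpr ⟨Finset.mem_univ _, by
      rw [T1]; exact lt_of_le_of_ne (not_lt.mp h2) h⟩⟩) with htfun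
  have tfunK : ∀ i, s' i = i → s (tfun i) = tfun i := by
    intro i h
    rw [htfun]
    dsimp only
    rw [dif_pos h]
    exact memK2 _
  have tfunA_lt : ∀ i, i < s' i → tfun i < s (tfun i) := by
    intro i h2
    rw [htfun]
    dsimp only
    rw [dif_neg (ne_of_gt h2), dif_pos h2]
    exact memA1 _
  have tfunB_gt : ∀ i, ¬ s' i = i → ¬ i < s' i → s (tfun i) < tfun i := by
    intro i h h2
    rw [htfun]
    dsimp only
    rw [dif_neg h, dif_neg h2, S1]
    exact memA1 _
  have hM1 : ∀ i, tfun (s' i) = s (tfun i) := by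
    intro i
    by_cases h : s' i = i
    · rw [h]
      exact (tfunK i h).symm
    · by_cases h2 : i < s' i
      · have hb1 : ¬ s' (s' i) = s' i := by rw [T1]; exact fun he => h he.symm
        have hb2 : ¬ s' i < s' (s' i) := by rw [T1]; exact not_lt.mpr (le_of_lt h2)
        rw [htfun]
        dsimp only
        rw [dif_neg hb1, dif_neg hb2, dif_neg h, dif_pos h2]
        exact congrArg (fun x => s (↑(e1 x) : Fin n)) (Subtype.ext (T1 i))
      · have hlt : s' i < i := lt_of_le_of_ne (not_lt.mp h2) h
        have ha1 : ¬ s' (s' i) = s' i := by rw [T1]; exact fun he => h he.symm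
        have ha2 : s' i < s' (s' i) := by rw [T1]; exact hlt
        rw [htfun]
        dsimp only
        rw [dif_neg ha1, dif_pos ha2, dif_neg h, dif_neg h2, S1]
  have tinj : Function.Injective tfun := by
    have sinj : Function.Injective s := fun a b hab => by rw [← S1 a, hab, S1 b]
    have s'inj : Function.Injective s' := fun a b hab => by rw [← T1 a, hab, T1 b]
    intro a b hab
    by_cases ha : s' a = a <;> by_cases hb : s' b = b
    · rw [htfun] at hab
      dsimp only at hab
      rw [dif_pos ha, dif_pos hb] at hab
      exact congrArg Subtype.val (e2.injective (Subtype.ext hab))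
    · exfalso
      have h1 := tfunK a ha
      by_cases hb2 : b < s' b
      · have h2 := tfunA_lt b hb2
        rw [hab] at h1
        rw [h1] at h2
        exact lt_irrefl _ h2
      · have h2 := tfunB_gt b hb hb2
        rw [hab] at h1
        rw [h1] at h2
        exact lt_irrefl _ h2
    · exfalso
      have h1 := tfunK b hb
      by_cases ha2 : a < s' a
      · have h2 := tfunA_lt a ha2
        rw [← hab] at h1
        rw [h1] at h2
        exact lt_irrefl _ h2
      · have h2 := tfunB_gt a ha ha2
        rw [← hab] at h1
        rw [h1] at h2
        exact lt_irrefl _ h2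
    · by_cases ha2 : a < s' a <;> by_cases hb2 : b < s' b
      · rw [htfun] at hab
        dsimp only at hab
        rw [dif_neg ha, dif_pos ha2, dif_neg hb, dif_pos hb2] at hab
        exact congrArg Subtype.val (e1.injective (Subtype.ext hab))
      · exfalso
        have h1 := tfunA_lt a ha2
        have h2 := tfunB_gt b hb hb2
        rw [hab] at h1
        exact lt_irrefl _ (h1.trans h2)
      · exfalso
        have h1 := tfunA_lt b hb2
        have h2 := tfunB_gt a ha ha2
        rw [← hab] at h1
        exact lt_irrefl _ (h1.trans h2)
      · rw [htfun] at hab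
        dsimp only at hab
        rw [dif_neg ha, dif_neg ha2, dif_neg hb, dif_neg hb2] at hab
        have h3 := congrArg Subtype.val (e1.injective (Subtype.ext (sinj hab)))
        have h4 : s' a = s' b := h3
        have := congrArg s' h4
        rwa [T1, T1] at this
  have hbij : Function.Bijective tfun :=
    (Fintype.bijective_iff_injective_and_card tfun).mpr ⟨tinj, rfl⟩
  set ε : Fin n → ℤˣ := fun i =>
    if s' i = i ∨ i < s' i then 1 else η (tfun (s' i)) * η' (s' i) with hε
  refine ⟨Equiv.ofBijective tfun hbij, ε, ?_, ?_⟩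
  · intro i
    exact (hM1 i).symm
  · intro i
    show ε i * η (tfun i) = η' i * ε (s' i)
    by_cases h : s' i = i
    · have hε1 : ε i = 1 := if_pos (Or.inl h)
      have hε2 : ε (s' i) = 1 := by rw [h]; exact hε1
      rw [hε1, hε2, hfs _ (tfunK i h), hfs' i h]
      decide
    · by_cases h2 : i < s' i
      · have hε1 : ε i = 1 := if_pos (Or.inr h2)
        have hε2 : ε (s' i) = η (tfun (s' (s' i))) * η' (s' (s' i)) := by
          rw [hε]
          dsimp only
          rw [if_neg]
          rw [T1]
          rintro (he | hl)
          · exact h he.symm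
          · exact absurd hl (not_lt.mpr (le_of_lt h2))
        rw [T1] at hε2
        rw [hε1, hε2]
        rcases Int.units_eq_one_or (η (tfun i)) with h3 | h3 <;>
          rcases Int.units_eq_one_or (η' i) with h4 | h4 <;> rw [h3, h4] <;> decide
      · have hlt : s' i < i := lt_of_le_of_ne (not_lt.mp h2) h
        have hε1 : ε i = η (tfun (s' i)) * η' (s' i) := by
          rw [hε]
          dsimp only
          rw [if_neg]
          rintro (he | hl)
          · exact h he
          · exact h2 hl
        have hε2 : ε (s' i) = 1 := by
          apply if_pos
          right
          rw [T1]
          exact hlt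
        have h5 : η (tfun i) = η (tfun (s' i)) := by
          have hm := hM1 (s' i)
          rw [T1] at hm
          rw [hm, S2]
        have h6 : η' (s' i) = η' i := T2 i
        rw [hε1, hε2, h5, h6]
        rcases Int.units_eq_one_or (η (tfun (s' i))) with h3 | h3 <;>
          rcases Int.units_eq_one_or (η' i) with h4 | h4 <;> rw [h3, h4] <;> decide

end BbarAux

namespace BbarAux

open Finset

variable {n : ℕ}

lemma exists_intertwiner (σ σ' : Hgrp n)
    (S1 : ∀ i, permOf σ (permOf σ i) = i) (S2 : ∀ i, sg σ (permOf σ i) = sg σ i)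
    (T1 : ∀ i, permOf σ' (permOf σ' i) = i) (T2 : ∀ i, sg σ' (permOf σ' i) = sg σ' i)
    (hfs : ∀ i, permOf σ i = i → sg σ i = -1)
    (hfs' : ∀ i, permOf σ' i = i → sg σ' i = -1)
    (hcard : (univ.filter fun i => permOf σ' i = i).card
        = (univ.filter fun i => permOf σ i = i).card) :
    ∃ τ : Hgrp n, σ * τ = τ * σ' := by
  obtain ⟨t, ε, M1, M2⟩ := exists_t_eps (fun i => permOf σ i) (fun i => permOf σ' i)
    (fun i => sg σ i) (fun i => sg σ' i) S1 S2 T1 T2 hfs hfs' hcard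
  have hinv : Function.Involutive (fun p : Pt n => (p.1 * ε p.2, p.2)) := by
    intro p
    show (p.1 * ε p.2 * ε p.2, p.2) = p
    rw [mul_assoc, umul_self, mul_one]
  let τ₀ : Equiv.Perm (Pt n) :=
    (Function.Involutive.toPerm _ hinv).trans (Equiv.prodCongr (Equiv.refl ℤˣ) t)
  have hap : ∀ (δ : ℤˣ) (i : Fin n), τ₀ (δ, i) = (δ * ε i, t i) := fun δ i => rfl
  have hmem : τ₀ ∈ Hgrp n := by
    intro p
    obtain ⟨δ, i⟩ := p
    show τ₀ (-δ, i) = negPt (τ₀ (δ, i))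
    rw [hap, hap]
    show (-δ * ε i, t i) = (-(δ * ε i), t i)
    rw [neg_mul]
  refine ⟨⟨τ₀, hmem⟩, ?_⟩
  apply Subtype.ext
  rw [Subgroup.coe_mul, Subgroup.coe_mul]
  apply Equiv.ext
  intro p
  obtain ⟨δ, i⟩ := p
  rw [Equiv.Perm.mul_apply, Equiv.Perm.mul_apply]
  show (σ : Equiv.Perm (Pt n)) (τ₀ (δ, i)) = τ₀ ((σ' : Equiv.Perm (Pt n)) (δ, i))
  rw [hap, apply_any σ, apply_any σ', hap]
  have hfst : δ * ε i * sg σ (t i) = δ * sg σ' i * ε (permOf σ' i) := by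
    rw [mul_assoc, mul_assoc, M2 i]
  have hsnd : permOf σ (t i) = t (permOf σ' i) := M1 i
  rw [Prod.mk.injEq]
  exact ⟨hfst, hsnd⟩

lemma translation_conj (y1 y' : WC n) (h1 : y1 * y1 = 1) (h2 : y' * y' = 1)
    (hσ : y1.sigma = y'.sigma)
    (hfix1 : ∀ i, permOf y1.sigma i = i → sg y1.sigma i = -1 ∧ Odd (y1.vec i))
    (hfix' : ∀ i, permOf y'.sigma i = i → sg y'.sigma i = -1 ∧ Odd (y'.vec i))
    (hmod : (((fval y1 + (minusCard y1 : ℤ)) : ℤ) : ZMod 4)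
      = (((fval y' + (minusCard y' : ℤ)) : ℤ) : ZMod 4)) :
    ∃ g ∈ Bbar n, g⁻¹ * y1 * g = y' := by
  classical
  obtain ⟨S1, S2, S3⟩ := inv_data y1 h1
  obtain ⟨T1, T2, T3⟩ := inv_data y' h2
  have hfixy' := hfix'
  rw [← hσ] at T1 T2 T3 hfixy'
  set u : Fin n → ℤ := fun i =>
    if permOf y1.sigma i = i then (y'.vec i - y1.vec i) / 2
    else if i < permOf y1.sigma i then y'.vec i - y1.vec i else 0 with hu
  have hdvd : ∀ i, permOf y1.sigma i = i → 2 ∣ (y'.vec i - y1.vec i) := by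
    intro i hi
    have ho1 := (hfix1 i hi).2
    have ho2 := (hfixy' i hi).2
    obtain ⟨a, ha⟩ := ho1
    obtain ⟨b, hb⟩ := ho2
    exact ⟨b - a, by rw [ha, hb]; ring⟩
  have huK : ∀ i, permOf y1.sigma i = i → 2 * u i = y'.vec i - y1.vec i := by
    intro i hi
    rw [hu]
    dsimp only
    rw [if_pos hi]
    exact Int.two_mul_ediv_two_of_even (by
      obtain ⟨c, hc⟩ := hdvd i hi
      exact ⟨c, by omega⟩)
  have huA : ∀ i, i < permOf y1.sigma i → u i = y'.vec i - y1.vec i := by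
    intro i hi
    rw [hu]
    dsimp only
    rw [if_neg (ne_of_gt hi), if_pos hi]
  have huB : ∀ i, permOf y1.sigma i < i → u i = 0 := by
    intro i hi
    rw [hu]
    dsimp only
    rw [if_neg (by exact ne_of_lt hi), if_neg (not_lt.mpr (le_of_lt hi))]
  -- the candidate conjugator
  set g : WC n := ⟨1, u⟩ with hg
  have hgsigma : g.sigma = 1 := rfl
  have hgvec : g.vec = u := rfl
  have hminusg : minusCard g = 0 := by
    rw [minusCard_eq, Finset.card_eq_zero, Finset.filter_eq_empty_iff]
    intro i _
    rw [hgsigma]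
    rw [sg_one']
    decide
  -- key integer identity : 2 * ∑ u = fval y' - fval y1
  have hfv1 := fval_eq y1 (fun i hi => (hfix1 i hi).1)
  have hfv' := fval_eq y' (fun i hi => (hfix' i hi).1)
  rw [← hσ] at hfv'
  have hsum : 2 * (∑ i, u i) = fval y' - fval y1 := by
    have hsplit : (∑ i, u i)
        = (∑ i ∈ univ.filter (fun i => permOf y1.sigma i = i), u i)
          + ∑ i ∈ univ.filter (fun i => ¬ permOf y1.sigma i = i), u i :=
      (Finset.sum_filter_add_sum_filter_not univ _ u).symm
    have hsplit2 : (∑ i ∈ univ.filter (fun i => ¬ permOf y1.sigma i = i), u i)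
        = (∑ i ∈ (univ.filter (fun i => ¬ permOf y1.sigma i = i)).filter
            (fun i => i < permOf y1.sigma i), u i)
          + ∑ i ∈ (univ.filter (fun i => ¬ permOf y1.sigma i = i)).filter
            (fun i => ¬ i < permOf y1.sigma i), u i :=
      (Finset.sum_filter_add_sum_filter_not _ _ u).symm
    have hB0 : (∑ i ∈ (univ.filter (fun i => ¬ permOf y1.sigma i = i)).filter
        (fun i => ¬ i < permOf y1.sigma i), u i) = 0 := by
      apply Finset.sum_eq_zero
      intro i hi
      rw [filter_pair_gt, Finset.mem_filter] at hi
      exact huB i hi.2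
    have hKu : (∑ i ∈ univ.filter (fun i => permOf y1.sigma i = i), 2 * u i)
        = (∑ i ∈ univ.filter (fun i => permOf y1.sigma i = i), y'.vec i)
          - ∑ i ∈ univ.filter (fun i => permOf y1.sigma i = i), y1.vec i := by
      rw [← Finset.sum_sub_distrib]
      refine Finset.sum_congr rfl fun i hi => ?_
      exact huK i (Finset.mem_filter.mp hi).2
    have hAu : (∑ i ∈ (univ.filter (fun i => ¬ permOf y1.sigma i = i)).filter
        (fun i => i < permOf y1.sigma i), u i)
        = (∑ i ∈ univ.filter (fun i => i < permOf y1.sigma i), y'.vec i)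
          - ∑ i ∈ univ.filter (fun i => i < permOf y1.sigma i), y1.vec i := by
      rw [filter_pair_lt, ← Finset.sum_sub_distrib]
      refine Finset.sum_congr rfl fun i hi => ?_
      exact huA i (Finset.mem_filter.mp hi).2
    rw [hfv1, hfv', hsplit, hsplit2, hB0, hAu, add_zero, mul_add, Finset.mul_sum, hKu]
    ring
  have hmc : minusCard y1 = minusCard y' := by
    rw [minusCard_eq, minusCard_eq, hσ]
  -- g is in Bbar
  have hgB : g ∈ Bbar n := by
    show sumV g ≡ (minusCard g : ℤ) [ZMOD 2]
    rw [hminusg]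
    have hf : ((fval y1 : ℤ) : ZMod 4) = ((fval y' : ℤ) : ZMod 4) := by
      rw [hmc] at hmod
      push_cast at hmod
      exact add_right_cancel hmod
    have hz : (((fval y' - fval y1 : ℤ)) : ZMod 4) = 0 := by
      push_cast
      rw [hf]
      ring
    have hdvd4 : (4 : ℤ) ∣ (fval y' - fval y1) :=
      (ZMod.intCast_zmod_eq_zero_iff_dvd _ 4).mp hz
    obtain ⟨k, hk⟩ := hdvd4
    have hsum2 : sumV g = 2 * k := by
      have : 2 * sumV g = 2 * (2 * k) := by
        show 2 * (∑ i, g.vec i) = _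
        rw [hgvec, hsum, hk]
        ring
      omega
    show _ ≡ (((0 : ℕ)) : ℤ) [ZMOD 2]
    rw [hsum2]
    push_cast
    exact (Int.modEq_zero_iff_dvd).mpr ⟨k, rfl⟩
  refine ⟨g, hgB, ?_⟩
  -- compute the conjugate
  have e1 : (g⁻¹ : WC n).vec = -u := by
    rw [WC.inv_vec, hgsigma, inv_one]
    rw [show (((1 : Hgrp n)) : Equiv.Perm (Pt n)) = 1 from rfl, actV_one]
  have e3 : (g⁻¹ * y1 * g).vec = actV (y1.sigma : Equiv.Perm (Pt n)) (-u) + y1.vec + u := by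
    rw [WC.mul_vec, WC.mul_vec, e1, hgsigma]
    rw [show (((1 : Hgrp n)) : Equiv.Perm (Pt n)) = 1 from rfl, actV_one, hgvec]
  refine WC.ext ?_ ?_
  · rw [WC.mul_sigma, WC.mul_sigma, WC.inv_sigma, hgsigma, inv_one, one_mul, mul_one]
    exact hσ
  · rw [e3]
    funext i
    simp only [Pi.add_apply, Pi.neg_apply, actV_apply]
    rcases lt_trichotomy i (permOf y1.sigma i) with hA | hi | hB
    · have hu1 := huA i hA
      have hu2 : u (permOf y1.sigma i) = 0 := by
        apply huB
        rw [S1]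
        exact hA
      rw [hu1, hu2]
      ring
    · have hi' : permOf y1.sigma i = i := hi.symm
      have hsg := (hfix1 i hi').1
      have h2u := huK i hi'
      rw [hi', hsg]
      push_cast
      linarith
    · have hu1 := huB i hB
      have hu2 : u (permOf y1.sigma i) = y'.vec (permOf y1.sigma i)
          - y1.vec (permOf y1.sigma i) := by
        apply huA
        rw [S1]
        exact hB
      have hv' := T3 i
      have hw := S3 i
      have hc := ucast_sq (sg y1.sigma i)
      rw [hu1, hu2, hv', hw]
      linear_combination (y'.vec i - y1.vec i) * hc

end BbarAux

namespace BbarAux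

open Finset

variable {n : ℕ}

lemma ko_filter (x : WC n)
    (hfx : ∀ i, permOf x.sigma i = i → sg x.sigma i = -1 ∧ Odd (x.vec i)) :
    (univ.filter fun i : Fin n =>
        (x.sigma : Equiv.Perm (Pt n)) (1, i) = (-1, i) ∧ Odd (x.vec i))
      = univ.filter fun i => permOf x.sigma i = i := by
  apply Finset.filter_congr
  intro i _
  rw [eq_pair_iff]
  exact ⟨fun h => h.1.2, fun h => ⟨⟨(hfx i h).1, h⟩, (hfx i h).2⟩⟩

lemma fix_of_lct (y : WC n) (m ko : ℕ) (hty : lct y = (m, 0, ko, 0)) :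
    ∀ i, permOf y.sigma i = i → sg y.sigma i = -1 ∧ Odd (y.vec i) := by
  have hke : (univ.filter fun i : Fin n =>
      (y.sigma : Equiv.Perm (Pt n)) (1, i) = (-1, i) ∧ Even (y.vec i)) = ∅ := by
    have h := congrArg (fun p : ℕ × ℕ × ℕ × ℕ => p.2.1) hty
    simp only [lct] at h
    exact Finset.card_eq_zero.mp h
  have hl : (univ.filter fun i : Fin n =>
      (y.sigma : Equiv.Perm (Pt n)) (1, i) = (1, i)) = ∅ := by
    have h := congrArg (fun p : ℕ × ℕ × ℕ × ℕ => p.2.2.2) hty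
    simp only [lct] at h
    exact Finset.card_eq_zero.mp h
  intro i hi
  have h1 : sg y.sigma i = -1 := by
    rcases Int.units_eq_one_or (sg y.sigma i) with h | h
    · exfalso
      have hmem : i ∈ (univ.filter fun i : Fin n =>
          (y.sigma : Equiv.Perm (Pt n)) (1, i) = (1, i)) :=
        Finset.mem_filter.mpr ⟨Finset.mem_univ i, (eq_pair_iff _ _ _ _).mpr ⟨h, hi⟩⟩
      rw [hl] at hmem
      exact absurd hmem (Finset.notMem_empty i)
    · exact h
  refine ⟨h1, ?_⟩
  by_contra hodd
  have heven : Even (y.vec i) := Int.not_odd_iff_even.mp hodd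
  have hmem : i ∈ (univ.filter fun i : Fin n =>
      (y.sigma : Equiv.Perm (Pt n)) (1, i) = (-1, i) ∧ Even (y.vec i)) :=
    Finset.mem_filter.mpr ⟨Finset.mem_univ i, ⟨(eq_pair_iff _ _ _ _).mpr ⟨h1, hi⟩, heven⟩⟩
  rw [hke] at hmem
  exact absurd hmem (Finset.notMem_empty i)

end BbarAux

open BbarAux in
theorem Bbar_conjugacy_lct_f' (n : ℕ) (y y' : WC n) (hy : y ∈ Bbar n) (hy' : y' ∈ Bbar n)
    (h2 : orderOf y = 2) (h2' : orderOf y' = 2)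
    (hty : ∃ m ko, lct y = (m, 0, ko, 0)) (hty' : ∃ m ko, lct y' = (m, 0, ko, 0)) :
    (∃ g ∈ Bbar n, g⁻¹ * y * g = y') ↔
      (lct y = lct y' ∧
        fval y + (minusCard y : ℤ) ≡ fval y' + (minusCard y' : ℤ) [ZMOD 4]) := by
  classical
  obtain ⟨m, ko, htyv⟩ := hty
  obtain ⟨m', ko', htyv'⟩ := hty'
  have hyy : y * y = 1 := by
    have h := pow_orderOf_eq_one y
    rw [h2, pow_two] at h
    exact h
  have hy'y' : y' * y' = 1 := by
    have h := pow_orderOf_eq_one y'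
    rw [h2', pow_two] at h
    exact h
  have hfix := fix_of_lct y m ko htyv
  have hfix' := fix_of_lct y' m' ko' htyv'
  constructor
  · rintro ⟨g, hgB, hconj⟩
    obtain ⟨_, _, hlct, hmod⟩ := invariance y g y' hyy hgB hfix hconj
    refine ⟨hlct.symm, ?_⟩
    exact (ZMod.intCast_eq_intCast_iff _ _ _).mp hmod.symm
  · rintro ⟨hlct, hmod⟩
    obtain ⟨S1, S2, S3⟩ := inv_data y hyy
    obtain ⟨T1, T2, T3⟩ := inv_data y' hy'y'
    have hKcard : (Finset.univ.filter fun i => permOf y'.sigma i = i).card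
        = (Finset.univ.filter fun i => permOf y.sigma i = i).card := by
      have h := congrArg (fun p : ℕ × ℕ × ℕ × ℕ => p.2.2.1) hlct
      simp only [lct] at h
      rw [ko_filter y hfix, ko_filter y' hfix'] at h
      exact h.symm
    obtain ⟨τ, hτ⟩ := exists_intertwiner y.sigma y'.sigma S1 S2 T1 T2
      (fun i hi => (hfix i hi).1) (fun i hi => (hfix' i hi).1) hKcard
    -- choose a translation part for the conjugator to put it in Bbar
    have hu1 : ∃ u1 : Fin n → ℤ,
        (∑ i, u1 i) ≡ (((Finset.univ.filter fun i => sg τ i = -1).card : ℕ) : ℤ) [ZMOD 2] := by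
      by_cases hp : Even ((Finset.univ.filter fun i => sg τ i = -1).card)
      · refine ⟨0, ?_⟩
        obtain ⟨k, hk⟩ := hp
        have hz : (∑ i : Fin n, (0 : Fin n → ℤ) i) = 0 := by simp
        rw [hz]
        exact Int.ModEq.symm (Int.modEq_iff_dvd.mpr ⟨-(k : ℤ), by push_cast; omega⟩)
      · have hne : (Finset.univ.filter fun i => sg τ i = -1).Nonempty := by
          rw [Finset.nonempty_iff_ne_empty]
          intro he
          apply hp
          rw [he]
          simp
        obtain ⟨i0, _⟩ := hne
        refine ⟨fun j => if j = i0 then 1 else 0, ?_⟩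
        have hodd : Odd ((Finset.univ.filter fun i => sg τ i = -1).card) :=
          Nat.not_even_iff_odd.mp hp
        obtain ⟨k, hk⟩ := hodd
        have hz : (∑ j : Fin n, if j = i0 then (1 : ℤ) else 0) = 1 := by
          rw [Finset.sum_ite_eq' Finset.univ i0 (fun _ => (1 : ℤ))]
          simp
        rw [hz]
        exact Int.modEq_iff_dvd.mpr ⟨(k : ℤ), by push_cast; omega⟩
    obtain ⟨u1, hu1m⟩ := hu1
    set g1 : WC n := ⟨τ, u1⟩ with hg1def
    have hg1B : g1 ∈ Bbar n := by
      show sumV g1 ≡ (minusCard g1 : ℤ) [ZMOD 2]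
      rw [minusCard_eq]
      exact hu1m
    set y1 : WC n := g1⁻¹ * y * g1 with hy1
    obtain ⟨h1y1, hfix1, hlct1, hmod1⟩ := invariance y g1 y1 hyy hg1B hfix hy1.symm
    have hσ1 : y1.sigma = y'.sigma := by
      rw [hy1, WC.mul_sigma, WC.mul_sigma, WC.inv_sigma]
      show g1.sigma⁻¹ * y.sigma * g1.sigma = y'.sigma
      have hg1s : g1.sigma = τ := rfl
      rw [hg1s, mul_assoc, hτ, ← mul_assoc, inv_mul_cancel, one_mul]
    have hmodΦ : (((fval y1 + (minusCard y1 : ℤ)) : ℤ) : ZMod 4)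
        = (((fval y' + (minusCard y' : ℤ)) : ℤ) : ZMod 4) := by
      rw [hmod1]
      exact (ZMod.intCast_eq_intCast_iff _ _ _).mpr hmod
    obtain ⟨gt, hgtB, hgt⟩ := translation_conj y1 y' h1y1 hy'y' hσ1 hfix1 hfix' hmodΦ
    refine ⟨g1 * gt, mul_mem hg1B hgtB, ?_⟩
    have hre : (g1 * gt)⁻¹ * y * (g1 * gt) = gt⁻¹ * (g1⁻¹ * y * g1) * gt := by group
    rw [hre, ← hy1, hgt]

theorem Bbar_conjugacy_lct_f (n : ℕ) (y y' : WC n) (hy : y ∈ Bbar n) (hy' : y' ∈ Bbar n)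
    (h2 : orderOf y = 2) (h2' : orderOf y' = 2)
    (hty : ∃ m ko, lct y = (m, 0, ko, 0)) (hty' : ∃ m ko, lct y' = (m, 0, ko, 0)) :
    (∃ g ∈ Bbar n, g⁻¹ * y * g = y') ↔
      (lct y = lct y' ∧
        fval y + (minusCard y : ℤ) ≡ fval y' + (minusCard y' : ℤ) [ZMOD 4]) :=
  Bbar_conjugacy_lct_f' n y y' hy hy' h2 h2' hty hty'
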